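/- If d_TV(π₁(s), π₂(s)) ≤ δ for all states s of a finite MDP with rewards in [0, R_max] and discount γ, then the value functions satisfy ‖V^{π₁} - V^{π₂}‖_∞ ≤ 2γδR_max/(1-γ)² + 2δR_max/(1-γ). -/
import Mathlib


open Finset

/-- If two stochastic policies are pointwise `δ`-close in total variation, their
value functions are uniformly close. -/
theorem value_close_of_policy_tv_close {S A : Type*} [Fintype S] [Fintype A]
    (r : S → A → ℝ) (P : S → A → S → ℝ) (π₁ π₂ : S → A → ℝ)
    (γ Rmax δ : ℝ) (V₁ V₂ : S → ℝ)
    (hγ : 0 ≤ γ) (hγ1 : γ < 1) (hR : 0 ≤ Rmax)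
    (hr : ∀ s a, 0 ≤ r s a ∧ r s a ≤ Rmax)
    (hP : ∀ s a, (∀ s', 0 ≤ P s a s') ∧ ∑ s', P s a s' = 1)
    (hπ₁ : ∀ s, (∀ a, 0 ≤ π₁ s a) ∧ ∑ a, π₁ s a = 1)
    (hπ₂ : ∀ s, (∀ a, 0 ≤ π₂ s a) ∧ ∑ a, π₂ s a = 1)
    (hTV : ∀ s, (1 / 2) * ∑ a, |π₁ s a - π₂ s a| ≤ δ)
    (hV₁ : ∀ s, V₁ s = ∑ a, π₁ s a * (r s a + γ * ∑ s', P s a s' * V₁ s'))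
    (hV₂ : ∀ s, V₂ s = ∑ a, π₂ s a * (r s a + γ * ∑ s', P s a s' * V₂ s')) :
    ∀ s, |V₁ s - V₂ s| ≤ 2 * γ * δ * Rmax / (1 - γ) ^ 2 + 2 * δ * Rmax / (1 - γ) := by
  intro s
  have hγ' : (0:ℝ) < 1 - γ := by linarith
  have hδ : 0 ≤ δ := le_trans (by positivity) (hTV s)
  -- general bounds on a value function
  have key : ∀ (π : S → A → ℝ) (V : S → ℝ),
      (∀ t, (∀ a, 0 ≤ π t a) ∧ ∑ a, π t a = 1) →
      (∀ t, V t = ∑ a, π t a * (r t a + γ * ∑ s', P t a s' * V s')) →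
      ∀ t, 0 ≤ V t ∧ V t ≤ Rmax / (1 - γ) := by
    intro π V hπ hV t
    constructor
    · obtain ⟨t₀, -, ht₀⟩ := Finset.exists_min_image (univ : Finset S) V ⟨s, mem_univ s⟩
      have h1 : γ * V t₀ ≤ V t₀ := by
        calc γ * V t₀ = ∑ a, π t₀ a * (0 + γ * V t₀) := by
              rw [← Finset.sum_mul, (hπ t₀).2, one_mul, zero_add]
          _ ≤ ∑ a, π t₀ a * (r t₀ a + γ * ∑ s', P t₀ a s' * V s') := by
              refine Finset.sum_le_sum fun a _ => mul_le_mul_of_nonneg_left ?_ ((hπ t₀).1 a)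
              have hin : V t₀ ≤ ∑ s', P t₀ a s' * V s' := by
                calc V t₀ = ∑ s', P t₀ a s' * V t₀ := by
                      rw [← Finset.sum_mul, (hP t₀ a).2, one_mul]
                  _ ≤ ∑ s', P t₀ a s' * V s' :=
                      Finset.sum_le_sum fun s' _ =>
                        mul_le_mul_of_nonneg_left (ht₀ s' (mem_univ _)) ((hP t₀ a).1 s')
              have := (hr t₀ a).1
              nlinarith
          _ = V t₀ := (hV t₀).symm
      have h2 : 0 ≤ V t₀ := by nlinarith
      exact le_trans h2 (ht₀ t (mem_univ _))
    · obtain ⟨t₀, -, ht₀⟩ := Finset.exists_max_image (univ : Finset S) V ⟨s, mem_univ s⟩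
      have h1 : V t₀ ≤ Rmax + γ * V t₀ := by
        calc V t₀ = ∑ a, π t₀ a * (r t₀ a + γ * ∑ s', P t₀ a s' * V s') := hV t₀
          _ ≤ ∑ a, π t₀ a * (Rmax + γ * V t₀) := by
              refine Finset.sum_le_sum fun a _ => mul_le_mul_of_nonneg_left ?_ ((hπ t₀).1 a)
              have hin : ∑ s', P t₀ a s' * V s' ≤ V t₀ := by
                calc ∑ s', P t₀ a s' * V s' ≤ ∑ s', P t₀ a s' * V t₀ :=
                      Finset.sum_le_sum fun s' _ =>
                        mul_le_mul_of_nonneg_left (ht₀ s' (mem_univ _)) ((hP t₀ a).1 s')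
                  _ = V t₀ := by rw [← Finset.sum_mul, (hP t₀ a).2, one_mul]
              have := (hr t₀ a).2
              nlinarith
          _ = Rmax + γ * V t₀ := by rw [← Finset.sum_mul, (hπ t₀).2, one_mul]
      have h2 : V t₀ ≤ Rmax / (1 - γ) := by
        rw [le_div_iff₀ hγ']; nlinarith
      exact le_trans (ht₀ t (mem_univ _)) h2
  have hB₁ := key π₁ V₁ hπ₁ hV₁
  have hB₂ := key π₂ V₂ hπ₂ hV₂
  -- max of the difference
  obtain ⟨t₀, -, ht₀⟩ := Finset.exists_max_image (univ : Finset S)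
    (fun t => |V₁ t - V₂ t|) ⟨s, mem_univ s⟩
  set M := |V₁ t₀ - V₂ t₀| with hM
  have hMnn : 0 ≤ M := abs_nonneg _
  -- decomposition at t₀
  have hdiff : V₁ t₀ - V₂ t₀ =
      (∑ a, (π₁ t₀ a - π₂ t₀ a) * (r t₀ a + γ * ∑ s', P t₀ a s' * V₁ s')) +
      ∑ a, π₂ t₀ a * (γ * ∑ s', P t₀ a s' * (V₁ s' - V₂ s')) := by
    rw [hV₁ t₀, hV₂ t₀, ← Finset.sum_sub_distrib, ← Finset.sum_add_distrib]
    refine Finset.sum_congr rfl fun a _ => ?_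
    have h : ∑ s', P t₀ a s' * (V₁ s' - V₂ s') =
        (∑ s', P t₀ a s' * V₁ s') - ∑ s', P t₀ a s' * V₂ s' := by
      rw [← Finset.sum_sub_distrib]
      exact Finset.sum_congr rfl fun s' _ => mul_sub _ _ _
    rw [h]; ring
  -- bound the first sum
  have hQ : ∀ a, |r t₀ a + γ * ∑ s', P t₀ a s' * V₁ s'| ≤ Rmax / (1 - γ) := by
    intro a
    have hin₀ : 0 ≤ ∑ s', P t₀ a s' * V₁ s' :=
      Finset.sum_nonneg fun s' _ => mul_nonneg ((hP t₀ a).1 s') (hB₁ s').1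
    have hin : ∑ s', P t₀ a s' * V₁ s' ≤ Rmax / (1 - γ) := by
      calc ∑ s', P t₀ a s' * V₁ s' ≤ ∑ s', P t₀ a s' * (Rmax / (1 - γ)) :=
            Finset.sum_le_sum fun s' _ =>
              mul_le_mul_of_nonneg_left (hB₁ s').2 ((hP t₀ a).1 s')
        _ = Rmax / (1 - γ) := by rw [← Finset.sum_mul, (hP t₀ a).2, one_mul]
    rw [abs_le]
    have h1 := (hr t₀ a).1
    have h2 := (hr t₀ a).2
    have hRd : 0 ≤ Rmax / (1 - γ) := by positivity
    have hEq : Rmax + γ * (Rmax / (1 - γ)) = Rmax / (1 - γ) := by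
      field_simp; ring
    have hmul := mul_le_mul_of_nonneg_left hin hγ
    constructor
    · nlinarith
    · nlinarith
  have hsum1 : |∑ a, (π₁ t₀ a - π₂ t₀ a) * (r t₀ a + γ * ∑ s', P t₀ a s' * V₁ s')|
      ≤ 2 * δ * (Rmax / (1 - γ)) := by
    calc |∑ a, (π₁ t₀ a - π₂ t₀ a) * (r t₀ a + γ * ∑ s', P t₀ a s' * V₁ s')|
        ≤ ∑ a, |(π₁ t₀ a - π₂ t₀ a) * (r t₀ a + γ * ∑ s', P t₀ a s' * V₁ s')| :=
          Finset.abs_sum_le_sum_abs _ _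
      _ ≤ ∑ a, |π₁ t₀ a - π₂ t₀ a| * (Rmax / (1 - γ)) := by
          refine Finset.sum_le_sum fun a _ => ?_
          rw [abs_mul]
          exact mul_le_mul_of_nonneg_left (hQ a) (abs_nonneg _)
      _ = (∑ a, |π₁ t₀ a - π₂ t₀ a|) * (Rmax / (1 - γ)) := by rw [← Finset.sum_mul]
      _ ≤ 2 * δ * (Rmax / (1 - γ)) := by
          have := hTV t₀
          have hRd : 0 ≤ Rmax / (1 - γ) := by positivity
          nlinarith
  -- bound the second sum
  have hsum2 : |∑ a, π₂ t₀ a * (γ * ∑ s', P t₀ a s' * (V₁ s' - V₂ s'))| ≤ γ * M := by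
    calc |∑ a, π₂ t₀ a * (γ * ∑ s', P t₀ a s' * (V₁ s' - V₂ s'))|
        ≤ ∑ a, |π₂ t₀ a * (γ * ∑ s', P t₀ a s' * (V₁ s' - V₂ s'))| :=
          Finset.abs_sum_le_sum_abs _ _
      _ ≤ ∑ a, π₂ t₀ a * (γ * M) := by
          refine Finset.sum_le_sum fun a _ => ?_
          rw [abs_mul, abs_of_nonneg ((hπ₂ t₀).1 a)]
          refine mul_le_mul_of_nonneg_left ?_ ((hπ₂ t₀).1 a)
          rw [abs_mul, abs_of_nonneg hγ]
          refine mul_le_mul_of_nonneg_left ?_ hγ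
          calc |∑ s', P t₀ a s' * (V₁ s' - V₂ s')|
              ≤ ∑ s', |P t₀ a s' * (V₁ s' - V₂ s')| := Finset.abs_sum_le_sum_abs _ _
            _ ≤ ∑ s', P t₀ a s' * M := by
                refine Finset.sum_le_sum fun s' _ => ?_
                rw [abs_mul, abs_of_nonneg ((hP t₀ a).1 s')]
                exact mul_le_mul_of_nonneg_left (ht₀ s' (mem_univ _)) ((hP t₀ a).1 s')
            _ = M := by rw [← Finset.sum_mul, (hP t₀ a).2, one_mul]
      _ = γ * M := by rw [← Finset.sum_mul, (hπ₂ t₀).2, one_mul]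
  -- combine
  have hMbound : M ≤ 2 * δ * (Rmax / (1 - γ)) + γ * M := by
    calc M = |V₁ t₀ - V₂ t₀| := hM
      _ ≤ |∑ a, (π₁ t₀ a - π₂ t₀ a) * (r t₀ a + γ * ∑ s', P t₀ a s' * V₁ s')| +
          |∑ a, π₂ t₀ a * (γ * ∑ s', P t₀ a s' * (V₁ s' - V₂ s'))| := by
            rw [hdiff]; exact abs_add_le _ _
      _ ≤ 2 * δ * (Rmax / (1 - γ)) + γ * M := add_le_add hsum1 hsum2
  have hMfinal : M ≤ 2 * δ * Rmax / (1 - γ) ^ 2 := by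
    rw [le_div_iff₀ (by positivity)]
    have h : M * (1 - γ) ≤ 2 * δ * (Rmax / (1 - γ)) := by nlinarith
    have := mul_le_mul_of_nonneg_right h (le_of_lt hγ')
    calc M * (1 - γ) ^ 2 = M * (1 - γ) * (1 - γ) := by ring
      _ ≤ 2 * δ * (Rmax / (1 - γ)) * (1 - γ) := this
      _ = 2 * δ * Rmax := by field_simp
  have hRHS : 2 * γ * δ * Rmax / (1 - γ) ^ 2 + 2 * δ * Rmax / (1 - γ)
      = 2 * δ * Rmax / (1 - γ) ^ 2 := by
    field_simp
    ring
  rw [hRHS]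
  exact le_trans (ht₀ s (mem_univ _)) hMfinal
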